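/- arXiv:0810.4117 — 7 statements merged into one kernel-verified Lean document; each statement's English description precedes it below -/
import Mathlib

section
/- Let (X,d,W) be a uniformly convex W-hyperbolic space with modulus of uniform convexity η. Assume r > 0, ε ∈ (0,2] and a,x,y ∈ X satisfy d(x,a) ≤ r, d(y,a) ≤ r and d(x,y) ≥ εr. Then for every λ ∈ [0,1], d((1−λ)x ⊕ λy, a) ≤ (1 − 2λ(1−λ)η(r,ε))·r. -/
open Set Filter Metric Bornology Function

structure WHyp (X : Type*) [MetricSpace X] where
  W : X → X → ℝ → X
  W1 : ∀ (x y z : X), ∀ l ∈ Set.Icc (0:ℝ) 1,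
    dist z (W x y l) ≤ (1 - l) * dist z x + l * dist z y
  W2 : ∀ (x y : X), ∀ l ∈ Set.Icc (0:ℝ) 1, ∀ l' ∈ Set.Icc (0:ℝ) 1,
    dist (W x y l) (W x y l') = |l - l'| * dist x y
  W3 : ∀ (x y : X), ∀ l ∈ Set.Icc (0:ℝ) 1, W x y l = W y x (1 - l)
  W4 : ∀ (x y z w : X), ∀ l ∈ Set.Icc (0:ℝ) 1,
    dist (W x z l) (W y w l) ≤ (1 - l) * dist x y + l * dist z w

def WHyp.UnifConvex {X : Type*} [MetricSpace X] (H : WHyp X) (η : ℝ → ℝ → ℝ) : Prop :=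
  (∀ r ε : ℝ, 0 < r → ε ∈ Set.Ioc (0:ℝ) 2 → η r ε ∈ Set.Ioc (0:ℝ) 1) ∧
  (∀ (r ε : ℝ) (a x y : X), 0 < r → ε ∈ Set.Ioc (0:ℝ) 2 →
    dist x a ≤ r → dist y a ≤ r → ε * r ≤ dist x y →
    dist (H.W x y (1/2)) a ≤ (1 - η r ε) * r)

lemma WHyp.W_zero {X : Type*} [MetricSpace X] (H : WHyp X) (x y : X) : H.W x y 0 = x := by
  have h := H.W1 x y x 0 ⟨le_refl 0, by norm_num⟩
  simp at h
  exact (dist_le_zero.mp (by simpa [dist_comm] using h)).symm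

lemma WHyp.W_one {X : Type*} [MetricSpace X] (H : WHyp X) (x y : X) : H.W x y 1 = y := by
  have h := H.W1 x y y 1 ⟨by norm_num, le_refl 1⟩
  simp at h
  exact (dist_le_zero.mp (by simpa [dist_comm] using h)).symm

lemma WHyp.dist_W_left {X : Type*} [MetricSpace X] (H : WHyp X) (x y : X) {l : ℝ}
    (hl : l ∈ Set.Icc (0:ℝ) 1) : dist x (H.W x y l) = l * dist x y := by
  have h := H.W2 x y 0 ⟨le_refl 0, by norm_num⟩ l hl
  rw [H.W_zero] at h
  rw [h, abs_of_nonpos (by linarith [hl.1])]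
  ring

lemma WHyp.dist_W_right {X : Type*} [MetricSpace X] (H : WHyp X) (x y : X) {l : ℝ}
    (hl : l ∈ Set.Icc (0:ℝ) 1) : dist (H.W x y l) y = (1 - l) * dist x y := by
  have h := H.W2 x y l hl 1 ⟨by norm_num, le_refl 1⟩
  rw [H.W_one] at h
  rw [h, abs_of_nonpos (by linarith [hl.2])]
  ring

/-- In a uniformly convex W-hyperbolic space, λ-points between `x` and `y` are unique. -/
lemma WHyp.unique_pt {X : Type*} [MetricSpace X] (H : WHyp X) {η : ℝ → ℝ → ℝ}
    (hU : H.UnifConvex η) {x y p q : X} {l : ℝ} (hl : 0 < l) (hl1 : l < 1)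
    (hD : 0 < dist x y)
    (hpx : dist x p = l * dist x y) (hpy : dist p y = (1 - l) * dist x y)
    (hqx : dist x q = l * dist x y) (hqy : dist q y = (1 - l) * dist x y) :
    p = q := by
  by_contra hne
  have hpq : (0:ℝ) < dist p q := dist_pos.2 hne
  set D := dist x y with hDdef
  have h1l : (0:ℝ) < 1 - l := by linarith
  have hr1 : 0 < l * D := mul_pos hl hD
  have hr2 : 0 < (1 - l) * D := mul_pos h1l hD
  have hpq1 : dist p q ≤ 2 * (l * D) := by
    have := dist_triangle p x q
    rw [dist_comm p x] at this
    rw [hpx, hqx] at this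
    linarith
  have hpq2 : dist p q ≤ 2 * ((1 - l) * D) := by
    have := dist_triangle p y q
    rw [dist_comm y q] at this
    rw [hpy, hqy] at this
    linarith
  have hε1 : dist p q / (l * D) ∈ Set.Ioc (0:ℝ) 2 :=
    ⟨div_pos hpq hr1, (div_le_iff₀ hr1).2 (by linarith)⟩
  have hε2 : dist p q / ((1 - l) * D) ∈ Set.Ioc (0:ℝ) 2 :=
    ⟨div_pos hpq hr2, (div_le_iff₀ hr2).2 (by linarith)⟩
  have hm1 := hU.2 (l * D) (dist p q / (l * D)) x p q hr1 hε1
    (by rw [dist_comm]; exact hpx.le) (by rw [dist_comm]; exact hqx.le)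
    (by rw [div_mul_cancel₀ _ hr1.ne'])
  have hm2 := hU.2 ((1 - l) * D) (dist p q / ((1 - l) * D)) y p q hr2 hε2
    hpy.le hqy.le (by rw [div_mul_cancel₀ _ hr2.ne'])
  have hη1 := (hU.1 (l * D) _ hr1 hε1).1
  have hη2 := (hU.1 ((1 - l) * D) _ hr2 hε2).1
  have htri := dist_triangle x (H.W p q (1/2)) y
  rw [dist_comm x (H.W p q (1/2))] at htri
  have : D < D := by nlinarith [hm1, hm2, htri]
  exact lt_irrefl _ this

lemma WHyp.half_case {X : Type*} [MetricSpace X] (H : WHyp X) {η : ℝ → ℝ → ℝ}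
    (hU : H.UnifConvex η) (r ε : ℝ) (a x y : X)
    (hr : 0 < r) (hε : ε ∈ Set.Ioc (0:ℝ) 2)
    (hxa : dist x a ≤ r) (hya : dist y a ≤ r) (hxy : ε * r ≤ dist x y) :
    ∀ l : ℝ, 0 < l → l ≤ 1/2 →
      dist (H.W x y l) a ≤ (1 - 2 * l * (1 - l) * η r ε) * r := by
  intro l hl0 hl2
  have hD : 0 < dist x y := lt_of_lt_of_le (mul_pos hε.1 hr) hxy
  set D := dist x y with hDdef
  have hlI : l ∈ Set.Icc (0:ℝ) 1 := ⟨hl0.le, by linarith⟩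
  have h2lI : 2 * l ∈ Set.Icc (0:ℝ) 1 := ⟨by linarith, by linarith⟩
  have hhalfI : (1/2 : ℝ) ∈ Set.Icc (0:ℝ) 1 := by norm_num
  set m := H.W x y (1/2) with hm
  set p := H.W x m (2 * l) with hp
  set z := H.W x y l with hz
  have hxm : dist x m = (1/2) * D := H.dist_W_left x y hhalfI
  have hmy : dist m y = (1/2) * D := by
    have := H.dist_W_right x y hhalfI
    rw [this]; norm_num; rfl
  have hxp : dist x p = l * D := by
    have := H.dist_W_left x m h2lI
    rw [this, hxm]; ring
  have hpm : dist p m = (1 - 2 * l) * ((1/2) * D) := by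
    have := H.dist_W_right x m h2lI
    rw [this, hxm]
  have hpy : dist p y = (1 - l) * D := by
    have h1 : dist p y ≤ (1 - l) * D := by
      have := dist_triangle p m y
      rw [hpm, hmy] at this
      linarith
    have h2 : D ≤ dist x p + dist p y := dist_triangle x p y
    rw [hxp] at h2
    linarith
  have hxz : dist x z = l * D := H.dist_W_left x y hlI
  have hzy : dist z y = (1 - l) * D := H.dist_W_right x y hlI
  have hzp : z = p := H.unique_pt hU hl0 (by linarith) hD hxz hzy hxp hpy
  have hma : dist m a ≤ (1 - η r ε) * r := hU.2 r ε a x y hr hε hxa hya hxy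
  have hW1 := H.W1 x m a (2 * l) h2lI
  rw [dist_comm a x, dist_comm a m] at hW1
  have hηpos := (hU.1 r ε hr hε).1
  calc dist z a = dist a p := by rw [hzp, dist_comm]
    _ ≤ (1 - 2 * l) * dist x a + 2 * l * dist m a := by
        simpa [dist_comm a x, dist_comm a m] using H.W1 x m a (2 * l) h2lI
    _ ≤ (1 - 2 * l * (1 - l) * η r ε) * r := by
        nlinarith [mul_nonneg (by linarith : (0:ℝ) ≤ 1 - 2 * l) (by linarith : (0:ℝ) ≤ r - dist x a),
          mul_nonneg (by linarith : (0:ℝ) ≤ 2 * l) (by linarith : (0:ℝ) ≤ (1 - η r ε) * r - dist m a),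
          mul_pos (mul_pos (mul_pos hl0 hl0) hηpos) hr]

theorem stmt0 {X : Type*} [MetricSpace X] (H : WHyp X) (η : ℝ → ℝ → ℝ)
    (hU : H.UnifConvex η) (r ε : ℝ) (a x y : X)
    (hr : 0 < r) (hε : ε ∈ Set.Ioc (0:ℝ) 2)
    (hxa : dist x a ≤ r) (hya : dist y a ≤ r) (hxy : ε * r ≤ dist x y) :
    ∀ l ∈ Set.Icc (0:ℝ) 1,
      dist (H.W x y l) a ≤ (1 - 2 * l * (1 - l) * η r ε) * r := by
  intro l hl
  rcases eq_or_lt_of_le hl.1 with h0 | h0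
  · rw [← h0, H.W_zero]
    simpa using hxa
  rcases le_or_gt l (1/2) with hhalf | hhalf
  · exact H.half_case hU r ε a x y hr hε hxa hya hxy l h0 hhalf
  rcases eq_or_lt_of_le hl.2 with h1 | h1
  · rw [h1, H.W_one]
    simpa using hya
  · rw [H.W3 x y l hl]
    have := H.half_case hU r ε a y x hr hε hya hxa (by rwa [dist_comm]) (1 - l)
      (by linarith) (by linarith)
    calc dist (H.W y x (1 - l)) a ≤ (1 - 2 * (1 - l) * (1 - (1 - l)) * η r ε) * r := this
      _ = (1 - 2 * l * (1 - l) * η r ε) * r := by ring_nf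
end

section
/- Let (X,d,W) be a uniformly convex W-hyperbolic space with modulus of uniform convexity η. Assume r > 0, ε ∈ (0,2] and a,x,y ∈ X satisfy d(x,a) ≤ r, d(y,a) ≤ r and d(x,y) ≥ εr. Then for every λ ∈ [0,1] and every s ≥ r, d((1−λ)x ⊕ λy, a) ≤ (1 − 2λ(1−λ)η(s, εr/s))·s. -/
open Set Filter Metric Bornology Function

namespace WHyp

variable {X : Type*} [MetricSpace X] (H : WHyp X)

lemma Wzero (x y : X) : H.W x y 0 = x := by
  have h := H.W1 x y x 0 (by norm_num)
  simp at h
  exact h.symm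

lemma Wone (x y : X) : H.W x y 1 = y := by
  have h := H.W3 x y 1 (by norm_num)
  rw [h]; norm_num [H.Wzero]

lemma dist_W_left_s1 (x y : X) {l : ℝ} (hl : l ∈ Set.Icc (0:ℝ) 1) :
    dist (H.W x y l) x = l * dist x y := by
  have h := H.W2 x y l hl 0 (by norm_num)
  rw [H.Wzero] at h
  simpa [abs_of_nonneg hl.1] using h

lemma dist_W_right_s1 (x y : X) {l : ℝ} (hl : l ∈ Set.Icc (0:ℝ) 1) :
    dist (H.W x y l) y = (1 - l) * dist x y := by
  have h := H.W2 x y l hl 1 (by norm_num)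
  rw [H.Wone] at h
  rw [h, abs_of_nonpos (by linarith [hl.2]), neg_sub]

/-- In a uniformly convex W-hyperbolic space, `W x y l` for `l ≤ 1/2` coincides with
the point `W x m (2l)` where `m` is the midpoint of `x` and `y`. -/
lemma mid_eq {η : ℝ → ℝ → ℝ} (hU : H.UnifConvex η) (x y : X) {l : ℝ}
    (hl : l ∈ Set.Icc (0:ℝ) (1/2)) :
    H.W x y l = H.W x (H.W x y (1/2)) (2 * l) := by
  have hl1 : l ∈ Set.Icc (0:ℝ) 1 := ⟨hl.1, by linarith [hl.2]⟩
  have h2l : 2 * l ∈ Set.Icc (0:ℝ) 1 := ⟨by linarith [hl.1], by linarith [hl.2]⟩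
  set m := H.W x y (1/2) with hm
  set p := H.W x y l with hp
  set u := H.W x m (2 * l) with hu
  have hmx : dist m x = (1/2) * dist x y := H.dist_W_left_s1 x y (by norm_num)
  have hmy : dist m y = (1/2) * dist x y := by
    have := H.dist_W_right_s1 x y (l := 1/2) (by norm_num); rw [this]; norm_num
  have hpx : dist p x = l * dist x y := H.dist_W_left_s1 x y hl1
  have hpy : dist p y = (1 - l) * dist x y := H.dist_W_right_s1 x y hl1
  have hux : dist u x = l * dist x y := by
    have := H.dist_W_left_s1 x m h2l
    rw [this, dist_comm x m, hmx]; ring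
  have hum : dist u m = (1 - 2 * l) * ((1/2) * dist x y) := by
    have := H.dist_W_right_s1 x m h2l
    rw [this, dist_comm x m, hmx]
  have huy : dist u y = (1 - l) * dist x y := by
    have h1 : dist u y ≤ (1 - l) * dist x y := by
      calc dist u y ≤ dist u m + dist m y := dist_triangle u m y
        _ = (1 - l) * dist x y := by rw [hum, hmy]; ring
    have h2 : dist x y ≤ dist x u + dist u y := dist_triangle x u y
    rw [dist_comm x u, hux] at h2
    linarith
  rcases (eq_or_lt_of_le (dist_nonneg : (0:ℝ) ≤ dist p u)) with h | hδ
  · exact dist_eq_zero.mp h.symm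
  exfalso
  have hl0 : 0 < l := by
    rcases lt_or_eq_of_le hl.1 with h' | h'
    · exact h'
    exfalso
    have : dist p u ≤ dist p x + dist x u := dist_triangle p x u
    rw [dist_comm x u] at this
    rw [hpx, hux, ← h'] at this
    simp at this
    rw [this, dist_self] at hδ
    exact lt_irrefl _ hδ
  have hd0 : 0 < dist x y := by
    rcases lt_or_eq_of_le (dist_nonneg : (0:ℝ) ≤ dist x y) with h' | h'
    · exact h'
    exfalso
    have : dist p u ≤ dist p x + dist x u := dist_triangle p x u
    rw [dist_comm x u, hpx, hux, ← h'] at this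
    simp at this
    rw [this, dist_self] at hδ
    exact lt_irrefl _ hδ
  set R1 := l * dist x y with hR1
  set R2 := (1 - l) * dist x y with hR2
  have hR1p : 0 < R1 := mul_pos hl0 hd0
  have hR2p : 0 < R2 := mul_pos (by linarith [hl.2] : (0:ℝ) < 1 - l) hd0
  set δ := dist p u with hδd
  have hδ2R1 : δ ≤ 2 * R1 := by
    have := dist_triangle p x u
    rw [dist_comm x u, hpx, hux] at this
    rw [hδd]; linarith
  have hδ2R2 : δ ≤ 2 * R2 := by
    have := dist_triangle p y u
    rw [dist_comm y u, hpy, huy] at this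
    rw [hδd]; linarith
  have hε1 : δ / R1 ∈ Set.Ioc (0:ℝ) 2 :=
    ⟨div_pos hδ hR1p, (div_le_iff₀ hR1p).mpr (by linarith)⟩
  have hε2 : δ / R2 ∈ Set.Ioc (0:ℝ) 2 :=
    ⟨div_pos hδ hR2p, (div_le_iff₀ hR2p).mpr (by linarith)⟩
  have hc1 := hU.2 R1 (δ / R1) x p u hR1p hε1 (le_of_eq hpx) (le_of_eq hux)
    (le_of_eq (div_mul_cancel₀ δ (ne_of_gt hR1p)))
  have hc2 := hU.2 R2 (δ / R2) y p u hR2p hε2 (le_of_eq hpy) (le_of_eq huy)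
    (le_of_eq (div_mul_cancel₀ δ (ne_of_gt hR2p)))
  have hη1 := (hU.1 R1 (δ / R1) hR1p hε1).1
  have hη2 := (hU.1 R2 (δ / R2) hR2p hε2).1
  have hlt1 : dist (H.W p u (1/2)) x < R1 := by nlinarith
  have hlt2 : dist (H.W p u (1/2)) y < R2 := by nlinarith
  have htr : dist x y ≤ dist x (H.W p u (1/2)) + dist (H.W p u (1/2)) y :=
    dist_triangle _ _ _
  rw [dist_comm x (H.W p u (1/2))] at htr
  have : R1 + R2 = dist x y := by rw [hR1, hR2]; ring
  linarith

lemma half_case_s1 {η : ℝ → ℝ → ℝ} (hU : H.UnifConvex η) (r ε : ℝ) (a x y : X)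
    (hr : 0 < r) (hε : ε ∈ Set.Ioc (0:ℝ) 2)
    (hxa : dist x a ≤ r) (hya : dist y a ≤ r) (hxy : ε * r ≤ dist x y)
    {l : ℝ} (hl : l ∈ Set.Icc (0:ℝ) (1/2)) {s : ℝ} (hs : r ≤ s) :
    dist (H.W x y l) a ≤ (1 - 2 * l * η s (ε * r / s)) * s := by
  have hsp : 0 < s := lt_of_lt_of_le hr hs
  have hεs : ε * r / s ∈ Set.Ioc (0:ℝ) 2 := by
    constructor
    · exact div_pos (mul_pos hε.1 hr) hsp
    · rw [div_le_iff₀ hsp]; nlinarith [hε.2]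
  have hηmem := hU.1 s (ε * r / s) hsp hεs
  have hma : dist (H.W x y (1/2)) a ≤ (1 - η s (ε * r / s)) * s :=
    hU.2 s (ε * r / s) a x y hsp hεs (le_trans hxa hs) (le_trans hya hs)
      (by rw [div_mul_cancel₀ _ (ne_of_gt hsp)]; exact hxy)
  rw [H.mid_eq hU x y hl]
  have h2l : 2 * l ∈ Set.Icc (0:ℝ) 1 := ⟨by linarith [hl.1], by linarith [hl.2]⟩
  have h := H.W1 x (H.W x y (1/2)) a (2 * l) h2l
  rw [dist_comm]
  calc dist a (H.W x (H.W x y (1/2)) (2 * l))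
      ≤ (1 - 2 * l) * dist a x + 2 * l * dist a (H.W x y (1/2)) := h
    _ ≤ (1 - 2 * l) * s + 2 * l * ((1 - η s (ε * r / s)) * s) := by
        rw [dist_comm a x, dist_comm a (H.W x y (1/2))]
        have h1 : (0:ℝ) ≤ 1 - 2 * l := by linarith [hl.2]
        have h2 : (0:ℝ) ≤ 2 * l := by linarith [hl.1]
        exact add_le_add (mul_le_mul_of_nonneg_left (le_trans hxa hs) h1)
          (mul_le_mul_of_nonneg_left hma h2)
    _ = (1 - 2 * l * η s (ε * r / s)) * s := by ring

end WHyp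

theorem stmt1 {X : Type*} [MetricSpace X] (H : WHyp X) (η : ℝ → ℝ → ℝ)
    (hU : H.UnifConvex η) (r ε : ℝ) (a x y : X)
    (hr : 0 < r) (hε : ε ∈ Set.Ioc (0:ℝ) 2)
    (hxa : dist x a ≤ r) (hya : dist y a ≤ r) (hxy : ε * r ≤ dist x y) :
    ∀ l ∈ Set.Icc (0:ℝ) 1, ∀ s : ℝ, r ≤ s →
      dist (H.W x y l) a ≤ (1 - 2 * l * (1 - l) * η s (ε * r / s)) * s := by
  intro l hl s hs
  have hsp : 0 < s := lt_of_lt_of_le hr hs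
  have hεs : ε * r / s ∈ Set.Ioc (0:ℝ) 2 := by
    constructor
    · exact div_pos (mul_pos hε.1 hr) hsp
    · rw [div_le_iff₀ hsp]; nlinarith [hε.2]
  have hη0 := (hU.1 s (ε * r / s) hsp hεs).1
  rcases le_or_gt l (1/2) with hhalf | hhalf
  · have h := H.half_case_s1 hU r ε a x y hr hε hxa hya hxy ⟨hl.1, hhalf⟩ hs
    have : (1 - 2 * l * η s (ε * r / s)) * s ≤ (1 - 2 * l * (1 - l) * η s (ε * r / s)) * s := by
      nlinarith [mul_nonneg (mul_nonneg (mul_nonneg hl.1 hl.1) hη0.le) hsp.le]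
    linarith
  · have hl' : 1 - l ∈ Set.Icc (0:ℝ) (1/2) := ⟨by linarith [hl.2], by linarith⟩
    have hxy' : ε * r ≤ dist y x := by rwa [dist_comm]
    have h := H.half_case_s1 hU r ε a y x hr hε hya hxa hxy' hl' hs
    rw [H.W3 x y l hl]
    have h1l : (0:ℝ) ≤ 1 - l := by linarith [hl.2]
    have : (1 - 2 * (1 - l) * η s (ε * r / s)) * s ≤ (1 - 2 * l * (1 - l) * η s (ε * r / s)) * s := by
      nlinarith [mul_nonneg (mul_nonneg (mul_nonneg h1l h1l) hη0.le) hsp.le]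
    linarith
end

section
/- Let (X,d,W) be a complete UCW-hyperbolic space. Then the intersection of any decreasing sequence (C_n)_{n∈ℕ} of nonempty bounded closed convex subsets of X (i.e., C_{n+1} ⊆ C_n for all n) is nonempty. -/
open Set Filter Metric Bornology Function

/-- A modulus of uniform convexity is monotone if it decreases in `r` for fixed `ε`. -/
def MonotoneModulus (η : ℝ → ℝ → ℝ) : Prop :=
  ∀ r s ε : ℝ, 0 < r → r ≤ s → ε ∈ Set.Ioc (0:ℝ) 2 → η s ε ≤ η r ε

/-- A subset `C` is convex in the `W`-hyperbolic space `H`. -/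
def WHyp.ConvexSet {X : Type*} [MetricSpace X] (H : WHyp X) (C : Set X) : Prop :=
  ∀ x ∈ C, ∀ y ∈ C, ∀ l ∈ Set.Icc (0:ℝ) 1, H.W x y l ∈ C

theorem stmt3 {X : Type*} [MetricSpace X] [CompleteSpace X] (H : WHyp X)
    (η : ℝ → ℝ → ℝ) (hU : H.UnifConvex η) (hmon : MonotoneModulus η)
    (C : ℕ → Set X)
    (hne : ∀ n, (C n).Nonempty) (hbd : ∀ n, Bornology.IsBounded (C n))
    (hcl : ∀ n, IsClosed (C n)) (hconv : ∀ n, H.ConvexSet (C n))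
    (hdec : ∀ n, C (n + 1) ⊆ C n) :
    (⋂ n, C n).Nonempty := by
  classical
  obtain ⟨a, ha⟩ := hne 0
  have hsub : ∀ {k m : ℕ}, k ≤ m → C m ⊆ C k := by
    intro k m hkm
    induction hkm with
    | refl => exact subset_rfl
    | step h ih => exact (hdec _).trans ih
  set rseq : ℕ → ℝ := fun n => Metric.infDist a (C n) with hrseq
  have hmono : Monotone rseq := by
    intro m n hmn
    exact Metric.infDist_le_infDist_of_subset (hsub hmn) (hne n)
  obtain ⟨M, hM⟩ := (hbd 0).subset_closedBall a
  have hBdd : BddAbove (Set.range rseq) := by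
    refine ⟨M, ?_⟩
    rintro _ ⟨n, rfl⟩
    obtain ⟨y, hy⟩ := hne n
    calc rseq n ≤ dist a y := Metric.infDist_le_dist_of_mem hy
    _ = dist y a := dist_comm _ _
    _ ≤ M := hM (hsub (Nat.zero_le n) hy)
  set r : ℝ := ⨆ n, rseq n with hrdef
  have hle : ∀ n, rseq n ≤ r := fun n => le_ciSup hBdd n
  have hrnn : 0 ≤ r := le_trans (Metric.infDist_nonneg) (hle 0)
  have htend : Filter.Tendsto rseq Filter.atTop (nhds r) :=
    tendsto_atTop_ciSup hmono hBdd
  have hx : ∀ n : ℕ, ∃ x ∈ C n, dist a x < r + 1/(n+1) := by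
    intro n
    refine (Metric.infDist_lt_iff (hne n)).mp ?_
    have : (0:ℝ) < 1/(n+1) := by positivity
    linarith [hle n]
  choose x hxC hxd using hx
  have hxin : ∀ {k m : ℕ}, k ≤ m → x m ∈ C k := fun {k m} h => hsub h (hxC m)
  have hcauchy : CauchySeq x := by
    rw [Metric.cauchySeq_iff]
    intro ε hε
    set ε' : ℝ := min ε 1 with hε'def
    have hε'pos : 0 < ε' := lt_min hε one_pos
    by_cases hr0 : r = 0
    · obtain ⟨N, hN⟩ := exists_nat_gt (2/ε')
      refine ⟨N, fun n hn m hm => ?_⟩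
      have key : ∀ k : ℕ, N ≤ k → dist a (x k) < 1/((N:ℝ)+1) := by
        intro k hk
        have h1 : (1:ℝ)/((k:ℝ)+1) ≤ 1/((N:ℝ)+1) := by
          apply one_div_le_one_div_of_le (by positivity)
          have : (N:ℝ) ≤ (k:ℝ) := Nat.cast_le.mpr hk
          linarith
        have := hxd k
        rw [hr0] at this
        linarith
      have hNpos : (0:ℝ) < (N:ℝ)+1 := by positivity
      have h2 : 1/((N:ℝ)+1) + 1/((N:ℝ)+1) < ε' := by
        have h3 : 2/ε' < (N:ℝ) := hN
        rw [div_lt_iff₀ hε'pos] at h3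
        have h5 : (1:ℝ)/((N:ℝ)+1) * ((N:ℝ)+1) = 1 := by field_simp
        nlinarith [one_div_pos.mpr hNpos]
      have k1 := key n hn
      have k2 := key m hm
      have hd : dist (x n) (x m) ≤ dist (x n) a + dist a (x m) := dist_triangle _ _ _
      rw [dist_comm (x n) a] at hd
      have hε'le : ε' ≤ ε := min_le_left _ _
      linarith
    · have hrpos : 0 < r := lt_of_le_of_ne hrnn (Ne.symm hr0)
      set R := r + 1 with hR
      have hRpos : 0 < R := by positivity
      set ε₀ := ε' / R with hε₀
      have hε'le1 : ε' ≤ 1 := min_le_right _ _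
      have hε₀mem : ε₀ ∈ Set.Ioc (0:ℝ) 2 := by
        constructor
        · positivity
        · rw [hε₀, div_le_iff₀ hRpos]; nlinarith
      set η₀ := η R ε₀ with hη₀
      have hη₀mem := hU.1 R ε₀ hRpos hε₀mem
      have hη₀pos : 0 < η₀ := hη₀mem.1
      have hη₀le : η₀ ≤ 1 := hη₀mem.2
      have hg : Filter.Tendsto (fun n : ℕ => (1-η₀)*(r + 1/((n:ℝ)+1)))
          Filter.atTop (nhds ((1-η₀)*(r+0))) := by
        exact (tendsto_const_nhds.add tendsto_one_div_add_atTop_nhds_zero_nat).const_mul _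
      rw [add_zero] at hg
      have hlt : (1-η₀)*r < r := by nlinarith
      obtain ⟨N, hN⟩ := (hg.eventually_lt htend hlt).exists
      have key : ∀ m n : ℕ, N ≤ m → m ≤ n → dist (x m) (x n) < ε' := by
        intro m n hNm hmn
        by_contra hcon
        push_neg at hcon
        set s := r + 1/((m:ℝ)+1) with hs
        have hm1 : (0:ℝ) < (m:ℝ)+1 := by positivity
        have hspos : 0 < s := by positivity
        have hsR : s ≤ R := by
          have h1 : 1/((m:ℝ)+1) ≤ 1 := by
            rw [div_le_one hm1]
            have : (0:ℝ) ≤ (m:ℝ) := Nat.cast_nonneg m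
            linarith
          simp only [hs, hR]; linarith
        have h1m : dist (x m) a ≤ s := by rw [dist_comm]; exact (hxd m).le
        have h1n : dist (x n) a ≤ s := by
          rw [dist_comm]
          have h4 : 1/((n:ℝ)+1) ≤ 1/((m:ℝ)+1) := by
            apply one_div_le_one_div_of_le hm1
            have : (m:ℝ) ≤ (n:ℝ) := Nat.cast_le.mpr hmn
            linarith
          have := hxd n
          simp only [hs]; linarith
        have hεs : ε₀ * s ≤ dist (x m) (x n) := by
          have h5 : ε₀ * s ≤ ε' := by
            rw [hε₀, div_mul_eq_mul_div, div_le_iff₀ hRpos]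
            nlinarith [hε'pos.le]
          linarith
        have hmid := hU.2 s ε₀ a (x m) (x n) hspos hε₀mem h1m h1n hεs
        have hzC : H.W (x m) (x n) (1/2) ∈ C m :=
          hconv m (x m) (hxC m) (x n) (hxin hmn) (1/2) ⟨by norm_num, by norm_num⟩
        have h1 : rseq m ≤ dist a (H.W (x m) (x n) (1/2)) :=
          Metric.infDist_le_dist_of_mem hzC
        rw [dist_comm] at h1
        have hηcmp : η₀ ≤ η s ε₀ := hmon s R ε₀ hspos hsR hε₀mem
        have h2 : rseq N ≤ rseq m := hmono hNm
        have h4 : 1/((m:ℝ)+1) ≤ 1/((N:ℝ)+1) := by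
          apply one_div_le_one_div_of_le (by positivity)
          have : (N:ℝ) ≤ (m:ℝ) := Nat.cast_le.mpr hNm
          linarith
        have h6 : rseq m ≤ (1 - η s ε₀) * s := le_trans h1 hmid
        have h7 : (1 - η s ε₀) * s ≤ (1 - η₀) * s :=
          mul_le_mul_of_nonneg_right (by linarith) hspos.le
        have h8 : (1-η₀)*(r+1/((m:ℝ)+1)) ≤ (1-η₀)*(r+1/((N:ℝ)+1)) :=
          mul_le_mul_of_nonneg_left (by linarith) (by linarith)
        simp only [hs] at h6 h7
        linarith
      have hε'le : ε' ≤ ε := min_le_left _ _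
      refine ⟨N, fun n hn m hm => ?_⟩
      rcases le_total n m with h | h
      · exact lt_of_lt_of_le (key n m hn h) hε'le
      · rw [dist_comm]; exact lt_of_lt_of_le (key m n hm h) hε'le
  obtain ⟨p, hp⟩ := cauchySeq_tendsto_of_complete hcauchy
  refine ⟨p, Set.mem_iInter.mpr fun n => ?_⟩
  exact (hcl n).mem_of_tendsto hp (Filter.eventually_atTop.mpr ⟨n, fun k hk => hxin hk⟩)
end

section
/- Let (X,d,W) be a complete UCW-hyperbolic space, C a nonempty closed convex subset of X, and f : C → [0,∞) convex and lower semicontinuous. Assume moreover that for every sequence (x_n) in C, if lim_{n→∞} d(x_n,a) = ∞ for some a ∈ X then lim_{n→∞} f(x_n) = ∞. Then f attains its minimum on C. If in addition f((1/2)x ⊕ (1/2)y) < max{f(x), f(y)} for all x,y ∈ C with x ≠ y, then f attains its minimum at exactly one point of C. -/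
open Set Filter Metric Bornology Function

theorem stmt4 {X : Type*} [MetricSpace X] [CompleteSpace X] (H : WHyp X)
    (η : ℝ → ℝ → ℝ) (hU : H.UnifConvex η) (hmon : MonotoneModulus η)
    (C : Set X) (hCne : C.Nonempty) (hCcl : IsClosed C) (hCconv : H.ConvexSet C)
    (f : X → ℝ) (hf0 : ∀ x ∈ C, 0 ≤ f x)
    (hfconv : ∀ x ∈ C, ∀ y ∈ C, ∀ l ∈ Set.Icc (0:ℝ) 1,
      f (H.W x y l) ≤ (1 - l) * f x + l * f y)
    (hlsc : LowerSemicontinuousOn f C)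
    (hcoercive : ∀ u : ℕ → X, (∀ n, u n ∈ C) →
      (∃ a : X, Filter.Tendsto (fun n => dist (u n) a) Filter.atTop Filter.atTop) →
      Filter.Tendsto (fun n => f (u n)) Filter.atTop Filter.atTop) :
    (∃ z ∈ C, ∀ y ∈ C, f z ≤ f y) ∧
      ((∀ x ∈ C, ∀ y ∈ C, x ≠ y → f (H.W x y (1/2)) < max (f x) (f y)) →
        ∃! z, z ∈ C ∧ ∀ y ∈ C, f z ≤ f y) := by

  classical
  obtain ⟨a, haC⟩ := hCne
  have hbdd : BddBelow (f '' C) := ⟨0, by rintro _ ⟨x, hx, rfl⟩; exact hf0 x hx⟩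
  have hne : (f '' C).Nonempty := ⟨f a, a, haC, rfl⟩
  set m := sInf (f '' C) with hm
  have hmle : ∀ x ∈ C, m ≤ f x := fun x hx => csInf_le hbdd ⟨x, hx, rfl⟩
  have hfrac : ∀ k l : ℕ, k ≤ l → 1/((l:ℝ)+1) ≤ 1/((k:ℝ)+1) := by
    intro k l hkl
    have : (k:ℝ) ≤ (l:ℝ) := Nat.cast_le.mpr hkl
    apply one_div_le_one_div_of_le (by positivity)
    linarith
  have hfracpos : ∀ k : ℕ, (0:ℝ) < 1/((k:ℝ)+1) := fun k => by positivity
  set S : ℕ → Set X := fun k => {x | x ∈ C ∧ f x ≤ m + 1/((k:ℝ)+1)} with hS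
  have hSne : ∀ k, (S k).Nonempty := by
    intro k
    obtain ⟨_, ⟨x, hx, rfl⟩, hlt⟩ :=
      exists_lt_of_csInf_lt hne (by linarith [hfracpos k] : m < m + 1/((k:ℝ)+1))
    exact ⟨x, hx, hlt.le⟩
  have hSmono : ∀ k l : ℕ, k ≤ l → S l ⊆ S k := by
    intro k l hkl x hx
    exact ⟨hx.1, hx.2.trans (by linarith [hfrac k l hkl])⟩
  have hR : ∃ R : ℝ, ∀ x ∈ S 0, dist a x ≤ R := by
    by_contra hcon
    push_neg at hcon
    choose u huS hud using fun n : ℕ => hcon (n : ℝ)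
    have huC : ∀ n, u n ∈ C := fun n => (huS n).1
    have htend : Tendsto (fun n => dist (u n) a) atTop atTop := by
      apply tendsto_atTop_mono (fun n => ?_) tendsto_natCast_atTop_atTop
      rw [dist_comm]
      exact (hud n).le
    obtain ⟨n, hn⟩ := ((hcoercive u huC ⟨a, htend⟩).eventually_gt_atTop (m + 1)).exists
    have h2 : f (u n) ≤ m + 1 := by
      have := (huS n).2
      norm_num at this
      exact this
    linarith
  obtain ⟨R, hRle⟩ := hR
  set r : ℕ → ℝ := fun k => sInf (dist a '' S k) with hrdef
  have hrbddb : ∀ k, BddBelow (dist a '' S k) :=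
    fun k => ⟨0, by rintro _ ⟨x, hx, rfl⟩; exact dist_nonneg⟩
  have hrne : ∀ k, (dist a '' S k).Nonempty := fun k => (hSne k).image _
  have hrle : ∀ k, ∀ x ∈ S k, r k ≤ dist a x := fun k x hx => csInf_le (hrbddb k) ⟨x, hx, rfl⟩
  have hrmono : Monotone r := fun k l hkl =>
    le_csInf (hrne l) (by rintro _ ⟨x, hx, rfl⟩; exact hrle k x (hSmono k l hkl hx))
  have hrub : ∀ k, r k ≤ R := by
    intro k
    obtain ⟨x, hx⟩ := hSne k
    exact (hrle k x hx).trans (hRle x (hSmono 0 k (Nat.zero_le k) hx))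
  have hbddr : BddAbove (Set.range r) := ⟨R, by rintro _ ⟨k, rfl⟩; exact hrub k⟩
  set rr := ⨆ k, r k with hrr
  have hrler : ∀ k, r k ≤ rr := fun k => le_ciSup hbddr k
  have hrtend : Tendsto r atTop (nhds rr) := tendsto_atTop_ciSup hrmono hbddr
  have hr0nn : 0 ≤ r 0 := le_csInf (hrne 0) (by rintro _ ⟨x, hx, rfl⟩; exact dist_nonneg)
  have hrr0 : 0 ≤ rr := hr0nn.trans (hrler 0)
  have hy : ∀ k : ℕ, ∃ x ∈ S k, dist a x < r k + 1/((k:ℝ)+1) := by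
    intro k
    obtain ⟨_, ⟨x, hx, rfl⟩, hlt⟩ :=
      exists_lt_of_csInf_lt (hrne k) (by linarith [hfracpos k] : r k < r k + 1/((k:ℝ)+1))
    exact ⟨x, hx, hlt⟩
  choose y hyS hyd using hy
  have hyC : ∀ k, y k ∈ C := fun k => (hyS k).1
  have hyb : ∀ k, dist (y k) a ≤ rr + 1/((k:ℝ)+1) := by
    intro k
    rw [dist_comm]
    exact (hyd k).le.trans (by linarith [hrler k])
  have hhalf : (1/2 : ℝ) ∈ Set.Icc (0:ℝ) 1 := by norm_num
  have hmid : ∀ k l : ℕ, H.W (y k) (y l) (1/2) ∈ S (min k l) := by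
    intro k l
    have hwC := hCconv _ (hyC k) _ (hyC l) _ hhalf
    refine ⟨hwC, ?_⟩
    have h1 := hfconv _ (hyC k) _ (hyC l) _ hhalf
    have h2 := (hyS k).2
    have h3 := (hyS l).2
    have hk := hfrac (min k l) k (min_le_left k l)
    have hl := hfrac (min k l) l (min_le_right k l)
    linarith
  have h1div : Tendsto (fun k : ℕ => 1/((k:ℝ)+1)) atTop (nhds 0) :=
    tendsto_one_div_add_atTop_nhds_zero_nat
  have hcauchy : CauchySeq y := by
    rw [Metric.cauchySeq_iff]
    intro ε hε
    rcases eq_or_lt_of_le hrr0 with h0 | hrpos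
    · obtain ⟨N, hN⟩ := (h1div.eventually (eventually_lt_nhds (by linarith : (0:ℝ) < ε/2))).exists
      refine ⟨N, fun k hk l hl => ?_⟩
      have hk' := (hyb k).trans (by linarith [hfrac N k hk] : rr + 1/((k:ℝ)+1) ≤ rr + 1/((N:ℝ)+1))
      have hl' := (hyb l).trans (by linarith [hfrac N l hl] : rr + 1/((l:ℝ)+1) ≤ rr + 1/((N:ℝ)+1))
      calc dist (y k) (y l) ≤ dist (y k) a + dist a (y l) := dist_triangle _ _ _
        _ < ε := by rw [dist_comm a (y l)]; linarith [hk', hl']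
    · set ε₀ := min (ε/(rr+1)) 2 with hε₀def
      have hε₀ : ε₀ ∈ Set.Ioc (0:ℝ) 2 :=
        ⟨lt_min (by positivity) (by norm_num), min_le_right _ _⟩
      set δ := η (rr+1) ε₀ with hδdef
      have hδ := hU.1 (rr+1) ε₀ (by linarith) hε₀
      have hδrr : (0:ℝ) < δ*rr/4 := by
        have := hδ.1
        nlinarith
      have hev1 : ∀ᶠ N : ℕ in atTop, rr - δ*rr/4 < r N :=
        hrtend.eventually (eventually_gt_nhds (by linarith))
      have hev2 : ∀ᶠ N : ℕ in atTop, 1/((N:ℝ)+1) < δ*rr/4 :=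
        h1div.eventually (eventually_lt_nhds hδrr)
      obtain ⟨N, h1, h2⟩ := (hev1.and hev2).exists
      refine ⟨N, fun k hk l hl => ?_⟩
      by_contra hcon
      push_neg at hcon
      set s := rr + 1/((N:ℝ)+1) with hsdef
      have hspos : 0 < s := by positivity
      have hNle1 : 1/((N:ℝ)+1) ≤ 1 := by
        rw [div_le_one (by positivity)]
        linarith [Nat.cast_nonneg (α := ℝ) N]
      have hsle : s ≤ rr + 1 := by rw [hsdef]; linarith
      have hxk : dist (y k) a ≤ s := (hyb k).trans (by rw [hsdef]; linarith [hfrac N k hk])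
      have hxl : dist (y l) a ≤ s := (hyb l).trans (by rw [hsdef]; linarith [hfrac N l hl])
      have hεs : ε₀ * s ≤ dist (y k) (y l) := by
        have hh : ε₀ * s ≤ (ε/(rr+1)) * (rr+1) :=
          mul_le_mul (min_le_left _ _) hsle hspos.le (by positivity)
        rw [div_mul_cancel₀ ε (by linarith : rr + 1 ≠ 0)] at hh
        exact hh.trans hcon
      have huc := hU.2 s ε₀ a (y k) (y l) hspos hε₀ hxk hxl hεs
      have hmon' : δ ≤ η s ε₀ := hmon s (rr+1) ε₀ hspos hsle hε₀
      have hw : dist (H.W (y k) (y l) (1/2)) a ≤ (1 - δ) * s := by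
        refine huc.trans ?_
        nlinarith [hspos.le]
      have hrN : r N ≤ dist (H.W (y k) (y l) (1/2)) a := by
        have hNm : N ≤ min k l := le_min hk hl
        have := hrle (min k l) _ (hmid k l)
        rw [dist_comm]
        exact (hrmono hNm).trans this
      have hchain : r N ≤ (1 - δ) * s := hrN.trans hw
      rw [hsdef] at hchain
      nlinarith [hδ.1, hδ.2, hrpos, hfracpos N]
  obtain ⟨z, hz⟩ := cauchySeq_tendsto_of_complete hcauchy
  have hzC : z ∈ C := hCcl.mem_of_tendsto hz (Filter.Eventually.of_forall hyC)
  have hfzm : f z ≤ m := by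
    by_contra hcon
    push_neg at hcon
    have hz' : Tendsto y atTop (nhdsWithin z C) :=
      tendsto_nhdsWithin_iff.mpr ⟨hz, Filter.Eventually.of_forall hyC⟩
    have hcm : (m + f z)/2 < f z := by linarith
    have hev : ∀ᶠ k : ℕ in atTop, (m + f z)/2 < f (y k) :=
      hz'.eventually (hlsc z hzC _ hcm)
    have hev2 : ∀ᶠ k : ℕ in atTop, 1/((k:ℝ)+1) < (f z - m)/2 :=
      h1div.eventually (eventually_lt_nhds (by linarith))
    obtain ⟨k, hk1, hk2⟩ := (hev.and hev2).exists
    have := (hyS k).2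
    linarith
  have hmin : ∀ w ∈ C, f z ≤ f w := fun w hw => hfzm.trans (hmle w hw)
  refine ⟨⟨z, hzC, hmin⟩, ?_⟩
  intro hstrict
  refine ⟨z, ⟨hzC, hmin⟩, ?_⟩
  rintro w ⟨hwC, hwmin⟩
  by_contra hne'
  have h1 : f w = f z := le_antisymm (hwmin z hzC) (hmin w hwC)
  have h2 := hstrict w hwC z hzC hne'
  have hmidC := hCconv w hwC z hzC _ hhalf
  have h3 := hwmin _ hmidC
  rw [h1, max_self] at h2
  linarith
end

section
/- Let (X,d,W) be a complete UCW-hyperbolic space. Then every nonempty closed convex subset C of X is a Chebyshev set: for each x ∈ X there exists a unique z ∈ C such that d(x,z) = inf{d(x,y) : y ∈ C}. -/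
open Set Filter Metric Bornology Function

theorem stmt5 {X : Type*} [MetricSpace X] [CompleteSpace X] (H : WHyp X)
    (η : ℝ → ℝ → ℝ) (hU : H.UnifConvex η) (hmon : MonotoneModulus η)
    (C : Set X) (hCne : C.Nonempty) (hCcl : IsClosed C) (hCconv : H.ConvexSet C) :
    ∀ x : X, ∃! z, z ∈ C ∧ dist x z = Metric.infDist x C := by
  intro x
  set d := Metric.infDist x C with hdd
  have hd0 : 0 ≤ d := Metric.infDist_nonneg
  have hhalf : (1/2 : ℝ) ∈ Set.Icc (0:ℝ) 1 := by norm_num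
  -- uniqueness of minimizers
  have uniq : ∀ u v, u ∈ C → dist x u = d → v ∈ C → dist x v = d → u = v := by
    intro u v huC hu hvC hv
    rcases eq_or_lt_of_le hd0 with hdz | hdpos
    · have hu0 : dist x u = 0 := by rw [hu, ← hdz]
      have hv0 : dist x v = 0 := by rw [hv, ← hdz]
      have := dist_eq_zero.mp hu0
      have := dist_eq_zero.mp hv0
      simp_all
    · by_contra hne
      have hduv : 0 < dist u v := dist_pos.mpr hne
      have hle2d : dist u v ≤ 2 * d := by
        calc dist u v ≤ dist u x + dist x v := dist_triangle _ _ _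
          _ = 2 * d := by rw [dist_comm u x, hu, hv]; ring
      set ε := dist u v / d with hε
      have hεmem : ε ∈ Set.Ioc (0:ℝ) 2 := by
        constructor
        · exact div_pos hduv hdpos
        · rw [div_le_iff₀ hdpos]; linarith
      have hεr : ε * d ≤ dist u v := by
        rw [hε, div_mul_cancel₀ _ (ne_of_gt hdpos)]
      have key := hU.2 d ε x u v hdpos hεmem
        (by rw [dist_comm]; exact le_of_eq hu) (by rw [dist_comm]; exact le_of_eq hv) hεr
      have hηpos := (hU.1 d ε hdpos hεmem).1
      have hmid : H.W u v (1/2) ∈ C := hCconv u huC v hvC _ hhalf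
      have hge : d ≤ dist x (H.W u v (1/2)) := Metric.infDist_le_dist_of_mem hmid
      rw [dist_comm] at hge
      nlinarith
  -- existence of a minimizer
  have ex : ∃ z, z ∈ C ∧ dist x z = d := by
    rcases eq_or_lt_of_le hd0 with hdz | hdpos
    · have hxC : x ∈ C := (hCcl.mem_iff_infDist_zero hCne).mpr hdz.symm
      exact ⟨x, hxC, by simp [← hdz]⟩
    · have hseq : ∀ n : ℕ, ∃ z ∈ C, dist x z < d + 1/(n+1) := by
        intro n
        apply (Metric.infDist_lt_iff hCne).mp
        have : (0:ℝ) < 1/(n+1) := by positivity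
        linarith
      choose z hzC hzd using hseq
      have hcauchy : CauchySeq z := by
        rw [Metric.cauchySeq_iff]
        intro ε hε
        obtain ⟨εb, hεble, hεbmem⟩ :
            ∃ εb : ℝ, εb ≤ ε / (2*d) ∧ εb ∈ Set.Ioc (0:ℝ) 2 :=
          ⟨min (ε / (2*d)) 2, min_le_left _ _,
            lt_min (div_pos hε (by linarith)) two_pos, min_le_right _ _⟩
        obtain ⟨hη0pos, hη0le⟩ := hU.1 (2*d) εb (by linarith) hεbmem
        obtain ⟨c, hcd, hcη, hcpos⟩ :
            ∃ c : ℝ, c ≤ d ∧ c ≤ η (2*d) εb * d ∧ 0 < c :=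
          ⟨min d (η (2*d) εb * d), min_le_left _ _, min_le_right _ _,
            lt_min hdpos (by positivity)⟩
        obtain ⟨N, hN⟩ := exists_nat_gt (1/c)
        have h1N : (1:ℝ)/(N+1) < c := by
          rw [div_lt_iff₀ (by positivity)]
          rw [div_lt_iff₀ hcpos] at hN
          nlinarith
        refine ⟨N, fun m hm n hn => ?_⟩
        by_contra hcon
        push_neg at hcon
        obtain ⟨r, hr⟩ : ∃ r : ℝ, r = d + 1/(N+1) := ⟨_, rfl⟩
        have hrpos : 0 < r := by rw [hr]; positivity
        have hrd : d ≤ r := by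
          rw [hr]; have : (0:ℝ) < 1/(N+1) := by positivity
          linarith
        have hmono : ∀ k, N ≤ k → dist (z k) x ≤ r := by
          intro k hk
          rw [dist_comm]
          have h1 : (1:ℝ)/(k+1) ≤ 1/(N+1) := by
            apply one_div_le_one_div_of_le (by positivity)
            exact_mod_cast by omega
          rw [hr]
          linarith [hzd k]
        have hr2d : r ≤ 2*d := by
          rw [hr]; linarith
        have hεbr : εb * r ≤ dist (z m) (z n) := by
          have h1 : εb * r ≤ εb * (2*d) := by nlinarith [hεbmem.1]
          have h2 : εb * (2*d) ≤ ε := (le_div_iff₀ (by linarith)).mp hεble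
          linarith
        have key := hU.2 r εb x (z m) (z n) hrpos hεbmem (hmono m hm) (hmono n hn) hεbr
        have hηmon : η (2*d) εb ≤ η r εb := hmon r (2*d) εb hrpos hr2d hεbmem
        have hmid : H.W (z m) (z n) (1/2) ∈ C := hCconv _ (hzC m) _ (hzC n) _ hhalf
        have hge : d ≤ dist (H.W (z m) (z n) (1/2)) x := by
          rw [dist_comm]; exact Metric.infDist_le_dist_of_mem hmid
        have h1Nη : (1:ℝ)/(N+1) < η (2*d) εb * d := lt_of_lt_of_le h1N hcη
        have hp1 : η (2*d) εb * r ≤ η r εb * r :=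
          mul_le_mul_of_nonneg_right hηmon hrpos.le
        have hp2 : η (2*d) εb * d ≤ η (2*d) εb * r :=
          mul_le_mul_of_nonneg_left hrd hη0pos.le
        rw [hr] at hp1 hp2 key
        nlinarith [key, hge, hp1, hp2, h1Nη]
      obtain ⟨p, hp⟩ := cauchySeq_tendsto_of_complete hcauchy
      have hpC : p ∈ C := hCcl.mem_of_tendsto hp (Filter.Eventually.of_forall hzC)
      refine ⟨p, hpC, le_antisymm ?_ (Metric.infDist_le_dist_of_mem hpC)⟩
      have htd : Filter.Tendsto (fun n => dist x (z n)) Filter.atTop (nhds (dist x p)) :=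
        Filter.Tendsto.dist tendsto_const_nhds hp
      have hbd : Filter.Tendsto (fun n : ℕ => d + 1/(n+1)) Filter.atTop (nhds d) := by
        have := tendsto_one_div_add_atTop_nhds_zero_nat (𝕜 := ℝ)
        simpa using (tendsto_const_nhds (x := d)).add this
      exact le_of_tendsto_of_tendsto' htd hbd fun n => le_of_lt (hzd n)
  obtain ⟨zm, hzmC, hzmd⟩ := ex
  exact ⟨zm, ⟨hzmC, hzmd⟩, fun y hy => uniq y zm hy.1 hy.2 hzmC hzmd⟩
end

section
/- Let (X,d,W) be a complete UCW-hyperbolic space. Then every bounded sequence (x_n) in X has a unique asymptotic center with respect to any nonempty closed convex subset C of X. -/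
open Set Filter Metric Bornology Function

section Aux

variable {X : Type*} [MetricSpace X] (x : ℕ → X)

/-- The asymptotic radius function. -/
noncomputable def asr (y : X) : ℝ := Filter.limsup (fun n => dist y (x n)) Filter.atTop

variable {x}

lemma asr_bddUnder (M : ℝ) (hM : ∀ n, dist (x n) (x 0) ≤ M) (y : X) :
    Filter.IsBoundedUnder (· ≤ ·) Filter.atTop (fun n => dist y (x n)) := by
  refine isBoundedUnder_of ⟨dist y (x 0) + M, fun n => ?_⟩
  calc dist y (x n) ≤ dist y (x 0) + dist (x 0) (x n) := dist_triangle _ _ _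
    _ ≤ dist y (x 0) + M := by have := hM n; rw [dist_comm] at this; linarith

lemma asr_cobdd (y : X) :
    Filter.IsCoboundedUnder (· ≤ ·) Filter.atTop (fun n => dist y (x n)) :=
  Filter.isCoboundedUnder_le_of_le Filter.atTop (fun _ => dist_nonneg)

lemma asr_nonneg (M : ℝ) (hM : ∀ n, dist (x n) (x 0) ≤ M) (y : X) : 0 ≤ asr x y :=
  Filter.le_limsup_of_frequently_le (Frequently.of_forall fun _ => dist_nonneg)
    (asr_bddUnder M hM y)

lemma asr_lip (M : ℝ) (hM : ∀ n, dist (x n) (x 0) ≤ M) (a b : X) : asr x a ≤ dist a b + asr x b := by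
  have h1 : asr x a ≤ Filter.limsup (fun n => dist a b + dist b (x n)) Filter.atTop := by
    refine Filter.limsup_le_limsup (Eventually.of_forall fun n => dist_triangle _ _ _)
      (asr_cobdd a) ?_
    refine isBoundedUnder_of ⟨dist a b + (dist b (x 0) + M), fun n => ?_⟩
    have : dist b (x n) ≤ dist b (x 0) + M := by
      calc dist b (x n) ≤ dist b (x 0) + dist (x 0) (x n) := dist_triangle _ _ _
        _ ≤ dist b (x 0) + M := by have := hM n; rw [dist_comm] at this; linarith
    linarith
  rwa [limsup_const_add Filter.atTop _ _ (asr_bddUnder M hM b) (asr_cobdd b)] at h1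

lemma dist_le_asr_add (M : ℝ) (hM : ∀ n, dist (x n) (x 0) ≤ M) (a b : X) : dist a b ≤ asr x a + asr x b := by
  have h1 : dist a b ≤ Filter.limsup (fun n => dist a (x n) + dist b (x n)) Filter.atTop := by
    refine Filter.le_limsup_of_frequently_le
      (Frequently.of_forall fun n => ?_) ?_
    · calc dist a b ≤ dist a (x n) + dist (x n) b := dist_triangle _ _ _
        _ = dist a (x n) + dist b (x n) := by rw [dist_comm (x n) b]
    · refine isBoundedUnder_of ⟨(dist a (x 0) + M) + (dist b (x 0) + M), fun n => ?_⟩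
      have h1 : dist a (x n) ≤ dist a (x 0) + M := by
        have := hM n; rw [dist_comm] at this
        linarith [dist_triangle a (x 0) (x n)]
      have h2 : dist b (x n) ≤ dist b (x 0) + M := by
        have := hM n; rw [dist_comm] at this
        linarith [dist_triangle b (x 0) (x n)]
      linarith
  refine h1.trans ?_
  exact limsup_add_le (u := fun n => dist a (x n)) (v := fun n => dist b (x n))
    (isBoundedUnder_of ⟨0, fun _ => dist_nonneg⟩) (asr_bddUnder M hM a)
    (asr_cobdd b) (asr_bddUnder M hM b)

/-- Key quantitative lemma: points almost minimizing the asymptotic radius are close. -/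
lemma asr_key (M : ℝ) (hM : ∀ n, dist (x n) (x 0) ≤ M) {H : WHyp X} {η : ℝ → ℝ → ℝ} (hU : H.UnifConvex η) (hmon : MonotoneModulus η)
    {C : Set X} (hCconv : H.ConvexSet C)
    (rs : ℝ) (hrs0 : 0 ≤ rs) (hlow : ∀ y ∈ C, rs ≤ asr x y)
    (ε : ℝ) (hε : 0 < ε) :
    ∃ δ > 0, ∀ a ∈ C, ∀ b ∈ C, asr x a ≤ rs + δ → asr x b ≤ rs + δ → dist a b ≤ ε := by
  rcases eq_or_lt_of_le hrs0 with hrs | hrs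
  · refine ⟨ε / 2, by positivity, fun a ha b hb hra hrb => ?_⟩
    have := dist_le_asr_add M hM a b
    rw [← hrs] at hra hrb
    linarith
  · -- rs > 0
    set εs : ℝ := min ε (2 * rs) with hεs
    have hεs0 : 0 < εs := lt_min hε (by linarith)
    set ε0 : ℝ := εs / (rs + 2) with hε0def
    have hrs2 : (0:ℝ) < rs + 2 := by linarith
    have hε00 : 0 < ε0 := div_pos hεs0 hrs2
    have hε02 : ε0 ≤ 2 := by
      rw [hε0def, div_le_iff₀ hrs2]
      have : εs ≤ 2 * rs := min_le_right _ _
      linarith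
    have hε0mem : ε0 ∈ Set.Ioc (0:ℝ) 2 := ⟨hε00, hε02⟩
    set η0 : ℝ := η (rs + 2) ε0 with hη0def
    have hη0 : η0 ∈ Set.Ioc (0:ℝ) 1 := hU.1 _ _ hrs2 hε0mem
    have hp : (0:ℝ) < η0 * rs / 4 := by
      have := hη0.1; positivity
    refine ⟨min 1 (η0 * rs / 4), lt_min one_pos hp, fun a ha b hb hra hrb => ?_⟩
    set δ : ℝ := min 1 (η0 * rs / 4) with hδdef
    have hδ0 : 0 < δ := lt_min one_pos hp
    have hδ1 : δ ≤ 1 := min_le_left _ _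
    have hδ2 : δ ≤ η0 * rs / 4 := min_le_right _ _
    by_contra hcon
    push_neg at hcon
    have hdab : εs ≤ dist a b := le_trans (min_le_left _ _) hcon.le
    set R : ℝ := rs + 2 * δ with hRdef
    have hR0 : 0 < R := by linarith
    have hRle : R ≤ rs + 2 := by linarith
    have hεR : ε0 * R ≤ dist a b := by
      have : ε0 * R ≤ ε0 * (rs + 2) := by nlinarith
      rw [hε0def] at this
      rw [div_mul_cancel₀ εs (ne_of_gt hrs2)] at this
      calc ε0 * R ≤ εs := by rw [hε0def]; exact this
        _ ≤ dist a b := hdab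
    -- eventually dist a (x n) ≤ R and dist b (x n) ≤ R
    have hea : ∀ᶠ n in Filter.atTop, dist a (x n) < R := by
      apply Filter.eventually_lt_of_limsup_lt
      · exact lt_of_le_of_lt hra (by rw [hRdef]; linarith)
      · exact asr_bddUnder M hM a
    have heb : ∀ᶠ n in Filter.atTop, dist b (x n) < R := by
      apply Filter.eventually_lt_of_limsup_lt
      · exact lt_of_le_of_lt hrb (by rw [hRdef]; linarith)
      · exact asr_bddUnder M hM b
    have hmem : H.W a b (1/2) ∈ C :=
      hCconv a ha b hb (1/2) ⟨by norm_num, by norm_num⟩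
    have hmid : asr x (H.W a b (1/2)) ≤ (1 - η R ε0) * R := by
      apply Filter.limsup_le_of_le (asr_cobdd _)
      filter_upwards [hea, heb] with n h1 h2
      exact hU.2 R ε0 (x n) a b hR0 hε0mem h1.le h2.le hεR
    have hmono : η0 ≤ η R ε0 := hmon R (rs + 2) ε0 hR0 hRle hε0mem
    have hηR := hU.1 R ε0 hR0 hε0mem
    have : rs ≤ (1 - η R ε0) * R := le_trans (hlow _ hmem) hmid
    have h2 : (1 - η R ε0) * R ≤ (1 - η0) * R := by nlinarith [hηR.1, hηR.2]
    have h3 : rs ≤ (1 - η0) * R := le_trans this h2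
    rw [hRdef] at h3
    nlinarith [hη0.1, hη0.2, mul_pos hη0.1 hrs, mul_nonneg hδ0.le hη0.1.le]

end Aux

theorem stmt7 {X : Type*} [MetricSpace X] [CompleteSpace X] (H : WHyp X)
    (η : ℝ → ℝ → ℝ) (hU : H.UnifConvex η) (hmon : MonotoneModulus η)
    (C : Set X) (hCne : C.Nonempty) (hCcl : IsClosed C) (hCconv : H.ConvexSet C)
    (x : ℕ → X) (hbd : Bornology.IsBounded (Set.range x)) :
    ∃! c, c ∈ C ∧ ∀ y ∈ C,
      Filter.limsup (fun n => dist c (x n)) Filter.atTop ≤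
        Filter.limsup (fun n => dist y (x n)) Filter.atTop := by
  obtain ⟨M, hMall⟩ := Metric.isBounded_iff.mp hbd
  have hM : ∀ n, dist (x n) (x 0) ≤ M :=
    fun n => hMall (mem_range_self n) (mem_range_self 0)
  -- the asymptotic radius infimum
  set r : X → ℝ := asr x with hrdef
  have hrchg : ∀ y : X, r y = Filter.limsup (fun n => dist y (x n)) Filter.atTop := fun _ => rfl
  set rs : ℝ := sInf (r '' C) with hrs
  have hne : (r '' C).Nonempty := hCne.image r
  have hbdd : BddBelow (r '' C) := ⟨0, fun z ⟨y, _, hy⟩ => hy ▸ asr_nonneg M hM y⟩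
  have hrs0 : 0 ≤ rs := le_csInf hne fun z ⟨y, _, hy⟩ => hy ▸ asr_nonneg M hM y
  have hlow : ∀ y ∈ C, rs ≤ r y := fun y hy => csInf_le hbdd ⟨y, hy, rfl⟩
  -- minimizing sequence
  have hseq : ∀ k : ℕ, ∃ y ∈ C, r y < rs + 1 / (k + 1) := by
    intro k
    have h : rs < rs + 1 / (k + 1) := by
      have : (0:ℝ) < 1 / (k + 1) := by positivity
      linarith
    obtain ⟨z, ⟨y, hy, hyz⟩, hz⟩ := exists_lt_of_csInf_lt hne h
    exact ⟨y, hy, hyz ▸ hz⟩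
  choose y hyC hyr using hseq
  -- Cauchy
  have hcauchy : CauchySeq y := by
    rw [Metric.cauchySeq_iff]
    intro ε hε
    obtain ⟨δ, hδ0, hδ⟩ := asr_key M hM hU hmon hCconv rs hrs0 hlow (ε / 2) (by positivity)
    obtain ⟨N, hN⟩ := exists_nat_one_div_lt hδ0
    refine ⟨N, fun m hm n hn => ?_⟩
    have h1 : r (y m) ≤ rs + δ := by
      have : (1:ℝ) / (m + 1) ≤ 1 / (N + 1) := by
        apply one_div_le_one_div_of_le (by positivity)
        exact_mod_cast by omega
      have := (hyr m).le.trans (by linarith [hN.le] : rs + 1 / (↑m + 1) ≤ rs + δ)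
      exact this
    have h2 : r (y n) ≤ rs + δ := by
      have : (1:ℝ) / (n + 1) ≤ 1 / (N + 1) := by
        apply one_div_le_one_div_of_le (by positivity)
        exact_mod_cast by omega
      exact (hyr n).le.trans (by linarith [hN.le])
    have := hδ (y m) (hyC m) (y n) (hyC n) h1 h2
    linarith
  obtain ⟨c, hc⟩ := cauchySeq_tendsto_of_complete hcauchy
  have hcC : c ∈ C := hCcl.mem_of_tendsto hc (Eventually.of_forall hyC)
  -- r c ≤ rs
  have hrc : r c ≤ rs := by
    have hlim : Filter.Tendsto (fun k => dist c (y k) + (rs + 1 / (k + 1))) Filter.atTop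
        (nhds (0 + (rs + 0))) := by
      apply Filter.Tendsto.add
      · simpa using (tendsto_const_nhds (x := c)).dist hc
      · exact tendsto_const_nhds.add tendsto_one_div_add_atTop_nhds_zero_nat
    rw [zero_add, add_zero] at hlim
    refine le_of_tendsto_of_tendsto tendsto_const_nhds hlim
      (Eventually.of_forall fun k => ?_)
    calc r c ≤ dist c (y k) + r (y k) := asr_lip M hM c (y k)
      _ ≤ dist c (y k) + (rs + 1 / (k + 1)) := by linarith [(hyr k).le]
  refine ⟨c, ⟨hcC, fun z hz => ?_⟩, ?_⟩
  · exact le_trans hrc (hlow z hz)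
  · rintro c' ⟨hc'C, hc'min⟩
    -- both have minimal value
    have h1 : r c' ≤ r c := hc'min c hcC
    have h2 : r c ≤ r c' := le_trans hrc (hlow c' hc'C)
    have heq : r c' = r c := le_antisymm h1 h2
    have hlow' : ∀ z ∈ C, r c' ≤ r z := hc'min
    have hrc'0 : 0 ≤ r c' := asr_nonneg M hM c'
    have : ∀ ε > (0:ℝ), dist c' c ≤ ε := by
      intro ε hε
      obtain ⟨δ, hδ0, hδ⟩ := asr_key M hM hU hmon hCconv (r c') hrc'0 hlow' ε hε
      exact hδ c' hc'C c hcC (by linarith) (by linarith [heq.ge])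
    have : dist c' c ≤ 0 := le_of_forall_pos_le_add (by intro ε hε; linarith [this ε hε])
    exact dist_le_zero.mp this
end

section
/- Let (X,d,W) be a complete UCW-hyperbolic space, C ⊆ X a nonempty bounded closed convex subset and T : C → C nonexpansive. Then T has a fixed point. -/
open Set Filter Metric Bornology Function

theorem stmt10 {X : Type*} [MetricSpace X] [CompleteSpace X] (H : WHyp X)
    (η : ℝ → ℝ → ℝ) (hU : H.UnifConvex η) (hmon : MonotoneModulus η)
    (C : Set X) (hCne : C.Nonempty) (hCbd : Bornology.IsBounded C)
    (hCcl : IsClosed C) (hCconv : H.ConvexSet C)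
    (T : X → X) (hT : Set.MapsTo T C C)
    (hTne : ∀ x ∈ C, ∀ y ∈ C, dist (T x) (T y) ≤ dist x y) :
    ∃ p ∈ C, T p = p := by
  classical
  obtain ⟨x₀, hx₀⟩ := hCne
  obtain ⟨D, hD⟩ := Metric.isBounded_iff.mp hCbd
  have hD0 : 0 ≤ D := le_trans dist_nonneg (hD hx₀ hx₀)
  -- Step A: approximate fixed points via Banach's fixed point theorem
  have afp : ∀ ε : ℝ, 0 < ε → ∃ z ∈ C, dist z (T z) ≤ ε := by
    intro ε hε
    have hden : (0:ℝ) < D + ε := by linarith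
    set t : ℝ := D / (D + ε) with htdef
    have ht0 : 0 ≤ t := div_nonneg hD0 hden.le
    have ht1 : t < 1 := (div_lt_one hden).mpr (by linarith)
    have htI : t ∈ Set.Icc (0:ℝ) 1 := ⟨ht0, ht1.le⟩
    haveI : Nonempty C := ⟨⟨x₀, hx₀⟩⟩
    haveI : CompleteSpace C := hCcl.completeSpace_coe
    set f : C → C := fun p =>
      ⟨H.W x₀ (T p) t, hCconv x₀ hx₀ _ (hT p.2) t htI⟩ with hfdef
    have hfc : ContractingWith ⟨t, ht0⟩ f := by
      constructor
      · exact_mod_cast ht1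
      · refine LipschitzWith.of_dist_le_mul ?_
        intro p q
        rw [Subtype.dist_eq, Subtype.dist_eq]
        have h5 := hTne p.1 p.2 q.1 q.2
        have this : dist (H.W x₀ (T p.1) t) (H.W x₀ (T q.1) t)
            ≤ (1 - t) * dist x₀ x₀ + t * dist (T p.1) (T q.1) :=
          H.W4 x₀ x₀ (T p.1) (T q.1) t htI
        simp only [dist_self, mul_zero, zero_add] at this
        calc dist (H.W x₀ (T p.1) t) (H.W x₀ (T q.1) t)
            ≤ t * dist (T p.1) (T q.1) := this
          _ ≤ t * dist p.1 q.1 := by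
              exact mul_le_mul_of_nonneg_left h5 ht0
          _ = (⟨t, ht0⟩ : NNReal) * dist p.1 q.1 := rfl
    set p : C := ContractingWith.fixedPoint f hfc with hpdef
    have hfix : f p = p := ContractingWith.fixedPoint_isFixedPt hfc
    have hpeq : H.W x₀ (T p.1) t = p.1 := congrArg Subtype.val hfix
    refine ⟨p.1, p.2, ?_⟩
    have h1 := H.W1 x₀ (T p.1) (T p.1) t htI
    rw [hpeq] at h1
    rw [dist_comm]
    simp only [dist_self, mul_zero, add_zero] at h1
    have h2 : dist (T p.1) x₀ ≤ D := hD (hT p.2) hx₀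
    have h1t : (1 - t) = ε / (D + ε) := by
      field_simp [htdef]
      rw [htdef, sub_mul, div_mul_cancel₀ _ hden.ne']; ring
    calc dist (T p.1) p.1 ≤ (1 - t) * dist (T p.1) x₀ := h1
      _ ≤ (1 - t) * D := by
          apply mul_le_mul_of_nonneg_left h2; linarith
      _ = ε * D / (D + ε) := by rw [h1t]; ring
      _ ≤ ε := by
          rw [div_le_iff₀ hden]
          nlinarith
  -- Step B: a sequence of approximate fixed points
  have hseq : ∀ n : ℕ, ∃ z ∈ C, dist z (T z) ≤ 1 / (n + 1) := fun n =>
    afp _ (by positivity)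
  choose u hu hu2 using hseq
  have hsmall : ∀ a : ℝ, 0 < a → ∀ᶠ n : ℕ in Filter.atTop, (1:ℝ)/(n+1) < a := by
    intro a ha
    have h2' : Filter.Tendsto (fun n : ℕ => (1:ℝ)/(n+1)) Filter.atTop (nhds 0) :=
      tendsto_one_div_add_atTop_nhds_zero_nat
    exact h2'.eventually (gt_mem_nhds ha)
  -- the asymptotic radius function
  set r : X → ℝ := fun y => Filter.limsup (fun n => dist (u n) y) Filter.atTop with hrdef
  have hbdd : ∀ y ∈ C, Filter.IsBoundedUnder (· ≤ ·) Filter.atTop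
      (fun n => dist (u n) y) := by
    intro y hy
    exact Filter.isBoundedUnder_of ⟨D, fun n => hD (hu n) hy⟩
  have hcobdd : ∀ y : X, Filter.IsCoboundedUnder (· ≤ ·) Filter.atTop
      (fun n => dist (u n) y) := by
    intro y
    exact Filter.isCoboundedUnder_le_of_le Filter.atTop fun n => dist_nonneg
  have hr_le : ∀ y : X, ∀ s : ℝ, (∀ᶠ n in Filter.atTop, dist (u n) y ≤ s) → r y ≤ s := by
    intro y s h
    exact Filter.limsup_le_of_le (hcobdd y) h
  have hr_ev : ∀ y ∈ C, ∀ s : ℝ, r y < s → ∀ᶠ n in Filter.atTop, dist (u n) y < s := by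
    intro y hy s h
    exact Filter.eventually_lt_of_limsup_lt h (hbdd y hy)
  have hr_nonneg : ∀ y ∈ C, 0 ≤ r y := by
    intro y hy
    exact Filter.le_limsup_of_frequently_le
      (Filter.Frequently.of_forall fun n => dist_nonneg) (hbdd y hy)
  have hr_lip : ∀ y ∈ C, ∀ z : X, r z ≤ r y + dist y z := by
    intro y hy z
    refine le_of_forall_pos_le_add ?_
    intro ε hε
    have h1 : r y < r y + ε := by linarith
    have h2 := hr_ev y hy _ h1
    refine hr_le z _ ?_
    filter_upwards [h2] with n hn
    calc dist (u n) z ≤ dist (u n) y + dist y z := dist_triangle _ _ _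
      _ ≤ r y + ε + dist y z := by linarith
      _ = r y + dist y z + ε := by ring
  set ρ : ℝ := sInf (r '' C) with hρdef
  have hρ_bddbelow : BddBelow (r '' C) := by
    refine ⟨0, ?_⟩
    rintro _ ⟨y, hy, rfl⟩
    exact hr_nonneg y hy
  have hρ_le : ∀ y ∈ C, ρ ≤ r y := fun y hy =>
    csInf_le hρ_bddbelow ⟨y, hy, rfl⟩
  have hρ0 : 0 ≤ ρ := le_csInf ⟨r x₀, x₀, hx₀, rfl⟩ (by rintro _ ⟨y, hy, rfl⟩; exact hr_nonneg y hy)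
  -- key uniform convexity lemma
  have keyUC : ∀ y ∈ C, ∀ z ∈ C, ∀ s ε : ℝ, 0 < s → ε ∈ Set.Ioc (0:ℝ) 2 →
      r y < s → r z < s → ε * s ≤ dist y z → ρ ≤ (1 - η s ε) * s := by
    intro y hy z hz s ε hs hε hry hrz hd
    have hm : H.W y z (1/2) ∈ C := hCconv y hy z hz (1/2) ⟨by norm_num, by norm_num⟩
    have h1 := hr_ev y hy s hry
    have h2 := hr_ev z hz s hrz
    refine le_trans (hρ_le _ hm) (hr_le _ _ ?_)
    filter_upwards [h1, h2] with n hn1 hn2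
    rw [dist_comm]
    refine hU.2 s ε (u n) y z hs hε ?_ ?_ hd
    · rw [dist_comm]; exact hn1.le
    · rw [dist_comm]; exact hn2.le
  -- the key approximation/uniqueness lemma
  have key : ∀ e : ℝ, 0 < e → ∃ δ : ℝ, 0 < δ ∧ ∀ y ∈ C, ∀ z ∈ C,
      r y < ρ + δ → r z < ρ + δ → dist y z < e := by
    intro e he
    rcases eq_or_lt_of_le hρ0 with hρz | hρpos
    · -- ρ = 0
      refine ⟨e/2, by linarith, ?_⟩
      intro y hy z hz hry hrz
      have h1 := hr_ev y hy _ hry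
      have h2 := hr_ev z hz _ hrz
      obtain ⟨n, hn1, hn2⟩ := (h1.and h2).exists
      calc dist y z ≤ dist (u n) y + dist (u n) z := dist_triangle_left _ _ _
        _ < (ρ + e/2) + (ρ + e/2) := by linarith
        _ = e := by rw [← hρz]; ring
    · -- ρ > 0
      set e' : ℝ := min e (ρ + 1) with he'def
      have he'0 : 0 < e' := lt_min he (by linarith)
      set ε : ℝ := e' / (ρ + 1) with hεdef
      have hρ1 : (0:ℝ) < ρ + 1 := by linarith
      have hε0 : 0 < ε := div_pos he'0 hρ1
      have hε2 : ε ≤ 2 := by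
        rw [div_le_iff₀ hρ1]
        have : e' ≤ ρ + 1 := min_le_right _ _
        linarith
      have hεI : ε ∈ Set.Ioc (0:ℝ) 2 := ⟨hε0, hε2⟩
      set c : ℝ := η (ρ + 1) ε with hcdef
      have hc := hU.1 (ρ + 1) ε hρ1 hεI
      have hc0 : 0 < c := hc.1
      have hc1 : c ≤ 1 := hc.2
      set δ : ℝ := min 1 (c * ρ / 2) with hδdef
      have hδ0 : 0 < δ := lt_min one_pos (by positivity)
      refine ⟨δ, hδ0, ?_⟩
      intro y hy z hz hry hrz
      by_contra hcon
      push_neg at hcon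
      have hd : e' ≤ dist y z := le_trans (min_le_left _ _) hcon
      set s : ℝ := ρ + δ with hsdef
      have hs0 : 0 < s := by rw [hsdef]; linarith
      have hs1 : s ≤ ρ + 1 := by
        have h6 : δ ≤ 1 := min_le_left _ _
        rw [hsdef]; linarith
      have hεs : ε * s ≤ dist y z := by
        have h1 : ε * s ≤ ε * (ρ + 1) := mul_le_mul_of_nonneg_left hs1 hε0.le
        have h2 : ε * (ρ + 1) = e' := by field_simp [hεdef]; rw [hεdef, div_mul_cancel₀ _ hρ1.ne']
        linarith
      have hK := keyUC y hy z hz s ε hs0 hεI hry hrz hεs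
      have hmono : c ≤ η s ε := hmon s (ρ + 1) ε hs0 hs1 hεI
      have hηs := hU.1 s ε hs0 hεI
      have h3 : (1 - η s ε) * s ≤ (1 - c) * s := by
        apply mul_le_mul_of_nonneg_right _ hs0.le
        linarith
      have h4 : (1 - c) * s < ρ := by
        have hδc : δ ≤ c * ρ / 2 := min_le_right _ _
        rw [hsdef]
        nlinarith
      linarith
  -- the minimizing sequence
  have hmin : ∀ n : ℕ, ∃ y ∈ C, r y < ρ + 1 / (n + 1) := by
    intro n
    have h : ρ < ρ + 1 / (n + 1) := by
      have : (0:ℝ) < 1 / (n + 1) := by positivity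
      linarith
    have hne : (r '' C).Nonempty := ⟨r x₀, x₀, hx₀, rfl⟩
    obtain ⟨a, ⟨y, hy, rfl⟩, hlt⟩ := exists_lt_of_csInf_lt hne h
    exact ⟨y, hy, hlt⟩
  choose v hv hv2 using hmin
  have hvC : CauchySeq v := by
    rw [Metric.cauchySeq_iff]
    intro e he
    obtain ⟨δ, hδ0, hkey⟩ := key e he
    obtain ⟨N, hN⟩ := exists_nat_gt (1 / δ)
    refine ⟨N, ?_⟩
    intro m hm n hn
    have hbound : ∀ k : ℕ, N ≤ k → r (v k) < ρ + δ := by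
      intro k hk
      have h2 : (1/δ : ℝ) < k + 1 := by
        calc (1/δ : ℝ) < N := hN
          _ ≤ k := by exact_mod_cast hk
          _ < k + 1 := by linarith
      have h1 : (1:ℝ) / (k + 1) < δ := by
        rw [div_lt_iff₀ (by positivity)]
        have h3 : (1:ℝ) < (k+1) * δ := (div_lt_iff₀ hδ0).mp h2
        linarith [mul_comm ((k:ℝ)+1) δ]
      linarith [hv2 k]
    exact hkey (v m) (hv m) (v n) (hv n) (hbound m hm) (hbound n hn)
  obtain ⟨z, hz⟩ := cauchySeq_tendsto_of_complete hvC
  have hzC : z ∈ C := hCcl.mem_of_tendsto hz (Filter.Eventually.of_forall hv)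
  -- r z ≤ ρ
  have hrz : r z ≤ ρ := by
    refine le_of_forall_pos_le_add ?_
    intro ε hε
    obtain ⟨n, hn1, hn2⟩ : ∃ n : ℕ, dist (v n) z < ε/2 ∧ (1:ℝ)/(n+1) < ε/2 := by
      have h1 : ∀ᶠ n : ℕ in Filter.atTop, dist (v n) z < ε/2 := by
        obtain ⟨N1, hN1⟩ := (Metric.tendsto_atTop.mp hz) (ε/2) (by linarith)
        exact Filter.eventually_atTop.mpr ⟨N1, hN1⟩
      exact (h1.and (hsmall (ε/2) (by linarith))).exists
    calc r z ≤ r (v n) + dist (v n) z := hr_lip (v n) (hv n) z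
      _ ≤ (ρ + 1/(n+1)) + ε/2 := by linarith [hv2 n]
      _ ≤ ρ + ε := by linarith
  have hrzρ : r z = ρ := le_antisymm hrz (hρ_le z hzC)
  -- r (T z) ≤ ρ
  have hTzC : T z ∈ C := hT hzC
  have hrTz : r (T z) ≤ ρ := by
    refine le_of_forall_pos_le_add ?_
    intro ε hε
    have h1 : r z < ρ + ε/2 := by rw [hrzρ]; linarith
    have h2 := hr_ev z hzC _ h1
    have h3 : ∀ᶠ n : ℕ in Filter.atTop, (1:ℝ)/(n+1) < ε/2 := hsmall (ε/2) (by linarith)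
    refine hr_le (T z) _ ?_
    filter_upwards [h2, h3] with n hn1 hn2
    calc dist (u n) (T z) ≤ dist (u n) (T (u n)) + dist (T (u n)) (T z) :=
          dist_triangle _ _ _
      _ ≤ 1/(n+1) + dist (u n) z := by
          have h6 := hTne (u n) (hu n) z hzC
          have h5 := hu2 n
          linarith
      _ ≤ ρ + ε := by linarith
  -- conclude: T z = z
  refine ⟨z, hzC, ?_⟩
  have hdz : dist z (T z) = 0 := by
    by_contra hne
    have hpos : 0 < dist z (T z) := lt_of_le_of_ne dist_nonneg (Ne.symm hne)
    obtain ⟨δ, hδ0, hkey⟩ := key (dist z (T z)) hpos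
    have h1 : r z < ρ + δ := by rw [hrzρ]; linarith
    have h2 : r (T z) < ρ + δ := by linarith
    exact absurd (hkey z hzC (T z) hTzC h1 h2) (lt_irrefl _)
  rw [← dist_eq_zero, dist_comm]
  exact hdz
end
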